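/- Let G be a recurrent, self-similar, level-transitive, regular branch subgroup of Aut(X*), and let n be such that G⋉v = G_# for all |v| ≥ n. Then X^m * G_# = rist_G(m) for all m ≥ n. -/

import Mathlib

open List

/-- Vertices of the regular rooted tree over alphabet `X`: finite words. -/
abbrev Vtx (X : Type*) := List X

section Tree

variable {X : Type*} [DecidableEq X]

/-- A permutation of the vertex set is a rooted-tree automorphism if it fixes the
root and maps children of a vertex to children of its image. -/
def IsTreeAut (f : Equiv.Perm (Vtx X)) : Prop :=
  f [] = [] ∧ ∀ (w : Vtx X) (x : X), ∃ y : X, f (w ++ [x]) = f w ++ [y]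

/-- The state (section) of `f` at the vertex `w`, as a function on vertices. -/
def stateFun (f : Equiv.Perm (Vtx X)) (w : Vtx X) : Vtx X → Vtx X :=
  fun t => (f (w ++ t)).drop w.length

/-- The rigid stabilizer of the vertex `v` in the full automorphism group:
all permutations moving only (proper or improper) descendants of `v`. -/
def rist (v : Vtx X) : Subgroup (Equiv.Perm (Vtx X)) where
  carrier := {g | ∀ w : Vtx X, ¬ v <+: w → g w = w}
  one_mem' := by intro w _; rfl
  mul_mem' := by
    intro a b ha hb w hw
    have : (a * b) w = a (b w) := rfl
    rw [this, hb w hw, ha w hw]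
  inv_mem' := by
    intro a ha w hw
    have h := ha w hw
    conv_lhs => rw [← h]
    exact Equiv.symm_apply_apply a w

/-- The rigid stabilizer of `v` in `G`. -/
def ristG (G : Subgroup (Equiv.Perm (Vtx X))) (v : Vtx X) :
    Subgroup (Equiv.Perm (Vtx X)) :=
  rist v ⊓ G

/-- The `n`-th level rigid stabilizer of `G`: the subgroup generated by the
rigid stabilizers of all vertices of level `n`. -/
def ristLevel (G : Subgroup (Equiv.Perm (Vtx X))) (n : ℕ) :
    Subgroup (Equiv.Perm (Vtx X)) :=
  ⨆ v ∈ {v : Vtx X | v.length = n}, ristG G v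

/-- The `n`-th level stabilizer of `G`: elements fixing all vertices of level `≤ n`. -/
def stabLevel (G : Subgroup (Equiv.Perm (Vtx X))) (n : ℕ) :
    Subgroup (Equiv.Perm (Vtx X)) :=
  G ⊓ { carrier := {g | ∀ w : Vtx X, w.length ≤ n → g w = w}
        one_mem' := by intro w _; rfl
        mul_mem' := by
          intro a b ha hb w hw
          have : (a * b) w = a (b w) := rfl
          rw [this, hb w hw, ha w hw]
        inv_mem' := by
          intro a ha w hw
          have h := ha w hw
          conv_lhs => rw [← h]
          exact Equiv.symm_apply_apply a w }

/-- Underlying function of the vtr `v*g`. -/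
def vtrFun (v : Vtx X) (g : Vtx X → Vtx X) : Vtx X → Vtx X :=
  fun w => if v <+: w then v ++ g (w.drop v.length) else w

lemma vtr_aux (v : Vtx X) (g h : Vtx X → Vtx X)
    (hgh : ∀ t, h (g t) = t) (w : Vtx X) :
    vtrFun v h (vtrFun v g w) = w := by
  by_cases hp : v <+: w
  · obtain ⟨t, rfl⟩ := hp
    simp [vtrFun, List.drop_left, hgh, List.prefix_append]
  · simp [vtrFun, hp]

/-- The vtr `v*g`: the automorphism acting as `g` on the subtree rooted
at `v` and trivially elsewhere. -/
def vtr (v : Vtx X) (g : Equiv.Perm (Vtx X)) : Equiv.Perm (Vtx X) where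
  toFun := vtrFun v g
  invFun := vtrFun v g.symm
  left_inv := vtr_aux v g g.symm fun t => g.symm_apply_apply t
  right_inv := vtr_aux v g.symm g fun t => g.apply_symm_apply t

lemma vtr_apply (v : Vtx X) (g : Equiv.Perm (Vtx X)) (w : Vtx X) :
    vtr v g w = if v <+: w then v ++ g (w.drop v.length) else w := rfl

/-- `g ↦ v*g` as a group homomorphism. -/
def vtrHom (v : Vtx X) : Equiv.Perm (Vtx X) →* Equiv.Perm (Vtx X) where
  toFun := vtr v
  map_one' := by
    ext w
    by_cases hp : v <+: w
    · obtain ⟨t, rfl⟩ := hp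
      simp [vtr, vtrFun, List.drop_left, List.prefix_append]
    · simp [vtr, vtrFun, hp]
  map_mul' := by
    intro a b
    ext w
    have hmul : (vtr v a * vtr v b) w = vtr v a (vtr v b w) := rfl
    rw [hmul]
    by_cases hp : v <+: w
    · obtain ⟨t, rfl⟩ := hp
      simp [vtr, vtrFun, List.drop_left, List.prefix_append]
    · simp [vtr, vtrFun, hp]

/-- `K` is a branching subgroup of `G`: `K ≤ G` and `v*K ≤ K` for all vertices. -/
def IsBranching (G K : Subgroup (Equiv.Perm (Vtx X))) : Prop :=
  K ≤ G ∧ ∀ v : Vtx X, ∀ g ∈ K, vtr v g ∈ K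

/-- The product `X^n * K` of the translates `v*K` over all vertices of level `n`. -/
def levelProd (K : Subgroup (Equiv.Perm (Vtx X))) (n : ℕ) :
    Subgroup (Equiv.Perm (Vtx X)) :=
  Subgroup.closure {p | ∃ v : Vtx X, v.length = n ∧ ∃ g ∈ K, p = vtr v g}

/-- The group `G⋉v` of states at `v` of the rigid stabilizer:
those `g ∈ G` with `v*g ∈ G`. -/
def pristSub (G : Subgroup (Equiv.Perm (Vtx X))) (v : Vtx X) :
    Subgroup (Equiv.Perm (Vtx X)) :=
  G ⊓ G.comap (vtrHom v)

/-- `G_#`, the intersection of all `G⋉v` (the maximal branching subgroup when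
`G` is regular branch). -/
def Gsharp (G : Subgroup (Equiv.Perm (Vtx X))) : Subgroup (Equiv.Perm (Vtx X)) :=
  ⨅ v : Vtx X, pristSub G v

/-- `G` is self-similar: all states of elements of `G` are (induced by) elements of `G`. -/
def SelfSimilar (G : Subgroup (Equiv.Perm (Vtx X))) : Prop :=
  ∀ g ∈ G, ∀ w : Vtx X, ∃ h ∈ G, ∀ t : Vtx X, h t = stateFun g w t

/-- `G` is level-transitive: transitive on each level of the tree. -/
def LevelTransitive (G : Subgroup (Equiv.Perm (Vtx X))) : Prop :=
  ∀ v w : Vtx X, v.length = w.length → ∃ g ∈ G, g v = w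

/-- `G` is recurrent: the state at `v` of the stabilizer of `v` is all of `G`. -/
def Recurrent (G : Subgroup (Equiv.Perm (Vtx X))) : Prop :=
  ∀ v : Vtx X, ∀ h : Equiv.Perm (Vtx X),
    (h ∈ G ↔ ∃ g ∈ G, g v = v ∧ ∀ t : Vtx X, h t = stateFun g v t)

/-- `G` is a regular branch group (for this action): it has a non-trivial
branching subgroup `K` with all products `X^n*K` of finite index in `G`. -/
def RegularBranch (G : Subgroup (Equiv.Perm (Vtx X))) : Prop :=
  ∃ K : Subgroup (Equiv.Perm (Vtx X)), IsBranching G K ∧ K ≠ ⊥ ∧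
    ∀ n : ℕ, ((levelProd K n).subgroupOf G).FiniteIndex

/-- The subgroup generated by `e`-th powers of elements of `H`. -/
def powSubgroup {P : Type*} [Group P] (H : Subgroup P) (e : ℕ) : Subgroup P :=
  Subgroup.closure {x | ∃ h ∈ H, x = h ^ e}

/-- The normal closure of `g` in the subgroup `Γ`. -/
def nclosure {P : Type*} [Group P] (Γ : Subgroup P) (g : P) : Subgroup P :=
  Subgroup.closure {x | ∃ h ∈ Γ, x = h * g * h⁻¹}

/-- `g` is finite-state: it has only finitely many states. -/
def FiniteState (g : Equiv.Perm (Vtx X)) : Prop :=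
  {f : Vtx X → Vtx X | ∃ w : Vtx X, f = stateFun g w}.Finite

/-- `g` fixes the boundary ray `y`, i.e. it fixes each of its finite prefixes. -/
def fixesRay (g : Equiv.Perm (Vtx X)) (y : ℕ → X) : Prop :=
  ∀ n : ℕ, g ((List.range n).map y) = (List.range n).map y

end Tree

/-- A group satisfies a (non-trivial) group law. -/
def SatisfiesLaw (G : Type*) [Group G] : Prop :=
  ∃ w : FreeGroup ℕ, w ≠ 1 ∧ ∀ φ : FreeGroup ℕ →* G, φ w = 1

section Aux

variable {X : Type*} [DecidableEq X]

lemma rist_fix_and_prefix (h : Equiv.Perm (Vtx X)) (hA : IsTreeAut h)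
    (v : Vtx X) (hfix : ∀ w : Vtx X, ¬ v <+: w → h w = w) :
    h v = v ∧ ∀ t : Vtx X, h (v ++ t) = v ++ stateFun h v t := by
  have hv : h v = v := by
    rcases v.eq_nil_or_concat with rfl | ⟨v', x, rfl⟩
    · exact hA.1
    · simp only [List.concat_eq_append]
      have hv' : h v' = v' := hfix v' (by
        intro hp
        have := hp.length_le
        simp at this)
      obtain ⟨y, hy⟩ := hA.2 v' x
      rw [hv'] at hy
      by_cases hxy : y = x
      · rw [hy, hxy]
      · exfalso
        have h2 : h (v' ++ [y]) = v' ++ [y] := by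
          apply hfix
          intro hp
          have heq : v' ++ [x] = v' ++ [y] := by
            simpa using hp.eq_of_length (by simp)
          exact hxy (by simpa using (List.append_cancel_left heq).symm)
        have h3 : v' ++ [x] = v' ++ [y] := by
          simpa using h.injective (hy.trans h2.symm)
        exact hxy (by simpa using (List.append_cancel_left h3).symm)
  refine ⟨hv, fun t => ?_⟩
  have hpre : ∀ t : Vtx X, v <+: h (v ++ t) := by
    intro t
    induction t using List.reverseRecOn with
    | nil => rw [List.append_nil, hv]
    | append_singleton t x ih =>
        obtain ⟨y, hy⟩ := hA.2 (v ++ t) x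
        rw [← List.append_assoc, hy]
        exact ih.trans ⟨[y], rfl⟩
  obtain ⟨r, hr⟩ := hpre t
  rw [stateFun, ← hr, List.drop_left]

end Aux

/-- for a recurrent, self-similar, level-transitive regular branch
group, `X^m * G_# = rist_G(m)` for all large enough `m`. -/
theorem levelProd_Gsharp_eq_ristLevel
    {X : Type*} [DecidableEq X] [Fintype X]
    (G : Subgroup (Equiv.Perm (Vtx X))) (hAut : ∀ g ∈ G, IsTreeAut g)
    (hRec : Recurrent G) (hSS : SelfSimilar G) (hLT : LevelTransitive G)
    (hRB : RegularBranch G)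
    (n : ℕ) (hn : ∀ v : Vtx X, n ≤ v.length → pristSub G v = Gsharp G) :
    ∀ m : ℕ, n ≤ m → levelProd (Gsharp G) m = ristLevel G m := by
  intro m hm
  apply _root_.le_antisymm
  · -- levelProd ≤ ristLevel
    rw [levelProd]
    apply (Subgroup.closure_le _).mpr
    rintro p ⟨v, hv, g, hg, rfl⟩
    have hg' : g ∈ pristSub G v := Subgroup.mem_iInf.mp hg v
    have hvG : vtr v g ∈ G := (Subgroup.mem_inf.mp hg').2
    have hmem : vtr v g ∈ ristG G v := by
      refine Subgroup.mem_inf.mpr ⟨?_, hvG⟩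
      intro w hw
      rw [vtr_apply, if_neg hw]
    exact le_iSup₂ (f := fun (v : Vtx X) (_ : v ∈ {v : Vtx X | v.length = m}) =>
      ristG G v) v hv hmem
  · -- ristLevel ≤ levelProd
    apply iSup₂_le
    intro v hv
    intro h hh
    obtain ⟨hr, hG⟩ := Subgroup.mem_inf.mp hh
    have hrinv : ∀ w : Vtx X, ¬ v <+: w → h⁻¹ w = w := fun w hw =>
      (rist v).inv_mem hr w hw
    obtain ⟨hfixv, hkey⟩ := rist_fix_and_prefix h (hAut h hG) v hr
    obtain ⟨hfixv', hkey'⟩ := rist_fix_and_prefix h⁻¹ (hAut h⁻¹ (G.inv_mem hG)) v hrinv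
    -- build the state permutation
    have hli : ∀ t : Vtx X, stateFun h⁻¹ v (stateFun h v t) = t := by
      intro t
      have e1 : v ++ stateFun h v t = h (v ++ t) := (hkey t).symm
      rw [stateFun, e1, (by exact Equiv.symm_apply_apply h (v ++ t) : h⁻¹ (h (v ++ t)) = v ++ t), List.drop_left]
    have hri : ∀ t : Vtx X, stateFun h v (stateFun h⁻¹ v t) = t := by
      intro t
      have e1 : v ++ stateFun h⁻¹ v t = h⁻¹ (v ++ t) := (hkey' t).symm
      rw [stateFun, e1, (by exact Equiv.apply_symm_apply h (v ++ t) : h (h⁻¹ (v ++ t)) = v ++ t), List.drop_left]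
    set s : Equiv.Perm (Vtx X) :=
      ⟨stateFun h v, stateFun h⁻¹ v, hli, hri⟩ with hs
    have hsG : s ∈ G := (hRec v s).mpr ⟨h, hG, hfixv, fun t => rfl⟩
    have hvtr : vtr v s = h := by
      ext w
      by_cases hp : v <+: w
      · obtain ⟨t, rfl⟩ := hp
        rw [vtr_apply, if_pos (List.prefix_append v t), List.drop_left, hkey t]
        rfl
      · rw [vtr_apply, if_neg hp, hr w hp]
    have hsprist : s ∈ pristSub G v := by
      refine Subgroup.mem_inf.mpr ⟨hsG, ?_⟩
      show vtr v s ∈ G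
      rw [hvtr]; exact hG
    have hsharp : s ∈ Gsharp G := by
      rw [← hn v (by rw [hv]; exact hm)]
      exact hsprist
    exact Subgroup.subset_closure ⟨v, hv, s, hsharp, hvtr.symm⟩
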